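/- Let (𝒩, K) be a power law kinetic system with an incidence independent decomposition 𝒩 = 𝒩₁ ∪ 𝒩₂ such that each subsystem (𝒩ᵢ, Kᵢ) is of CLP type with log-parametrization subspace S̃ᵢ, i.e., Z₊(𝒩ᵢ, Kᵢ) = {x ∈ ℝ^𝒮_{>0} : log x − log xᵢ ∈ S̃ᵢ^⊥} for some positive equilibrium xᵢ. If S̃₁ ∩ S̃₂ = {0}, then (𝒩, K) is of CLP type with Z₊(𝒩, K) = {x ∈ ℝ^𝒮_{>0} : log x − log x* ∈ (S̃₁ + S̃₂)^⊥} for some x* ∈ Z₊(𝒩, K); in particular Z₊(𝒩, K) ≠ ∅. -/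

import Mathlib

open Finset

/-- The set of complexes of subnetwork `i` (complexes occurring in its reactions). -/
def cplxSet {C R : Type} (src tgt : R → C) {k : ℕ} (part : R → Fin k) (i : Fin k) : Set C :=
  {c | ∃ r, part r = i ∧ (src r = c ∨ tgt r = c)}

/-- The set of common complexes of the decomposition: complexes occurring in at least
two distinct subnetworks. -/
def commonSet {C R : Type} (src tgt : R → C) {k : ℕ} (part : R → Fin k) : Set C :=
  {c | ∃ i j : Fin k, i ≠ j ∧ c ∈ cplxSet src tgt part i ∧ c ∈ cplxSet src tgt part j}

/-- Underlying (undirected) graph of the reaction network. -/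
def parentGraph {C R : Type} (src tgt : R → C) : SimpleGraph C :=
  SimpleGraph.fromRel (fun a b => ∃ r, src r = a ∧ tgt r = b)

/-- Underlying graph of subnetwork `i`. -/
def subGraph {C R : Type} (src tgt : R → C) {k : ℕ} (part : R → Fin k) (i : Fin k) :
    SimpleGraph C :=
  SimpleGraph.fromRel (fun a b => ∃ r, part r = i ∧ src r = a ∧ tgt r = b)

/-- The incidence map `I_a : ℝ^ℛ → ℝ^𝒞`. -/
noncomputable def incid {C R : Type} [Fintype R] [DecidableEq C] (src tgt : R → C) :
    (R → ℝ) →ₗ[ℝ] (C → ℝ) :=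
  ∑ r : R, (LinearMap.toSpanSingleton ℝ (C → ℝ)
      (Pi.single (tgt r) 1 - Pi.single (src r) 1)).comp (LinearMap.proj r)

/-- The incidence map of subnetwork `i`. -/
noncomputable def incidSub {C R : Type} [Fintype R] [DecidableEq C] (src tgt : R → C)
    {k : ℕ} (part : R → Fin k) (i : Fin k) : (R → ℝ) →ₗ[ℝ] (C → ℝ) :=
  ∑ r ∈ Finset.univ.filter (fun r => part r = i),
    (LinearMap.toSpanSingleton ℝ (C → ℝ)
      (Pi.single (tgt r) 1 - Pi.single (src r) 1)).comp (LinearMap.proj r)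

/-- Incidence independence: the image of the incidence map of the parent network is
the (internal) direct sum of the images of the subnetworks' incidence maps. -/
def IncIndep {C R : Type} [Fintype R] [DecidableEq C] (src tgt : R → C)
    {k : ℕ} (part : R → Fin k) : Prop :=
  LinearMap.range (incid src tgt) = (⨆ i : Fin k, LinearMap.range (incidSub src tgt part i)) ∧
  ∀ f : Fin k → (C → ℝ), (∀ i, f i ∈ LinearMap.range (incidSub src tgt part i)) →
    (∑ i, f i) = 0 → ∀ i, f i = 0

/-- Number of linkage classes of subnetwork `i`: connected components of its underlying
graph that meet its complex set. -/
noncomputable def numLCsub {C R : Type} (src tgt : R → C) {k : ℕ} (part : R → Fin k)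
    (i : Fin k) : ℕ :=
  Nat.card {comp : (subGraph src tgt part i).ConnectedComponent //
    ∃ c ∈ cplxSet src tgt part i, (subGraph src tgt part i).connectedComponentMk c = comp}
/-- Set of complex balanced equilibria `Z₊(𝒩, K)` of the whole network. -/
def Zfull {S C R : Type} [Fintype R] [DecidableEq C] (src tgt : R → C)
    (K : R → (S → ℝ) → ℝ) : Set (S → ℝ) :=
  {x | (∀ s, 0 < x s) ∧
    ∑ r : R, K r x • ((Pi.single (tgt r) 1 - Pi.single (src r) 1 : C → ℝ)) = 0}

/-- Set of complex balanced equilibria `Z₊(𝒩ᵢ, Kᵢ)` of subnetwork `i`. -/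
def Zsub {S C R : Type} [Fintype R] [DecidableEq C] (src tgt : R → C)
    (K : R → (S → ℝ) → ℝ) {k : ℕ} (part : R → Fin k) (i : Fin k) : Set (S → ℝ) :=
  {x | (∀ s, 0 < x s) ∧
    ∑ r ∈ Finset.univ.filter (fun r => part r = i),
      K r x • ((Pi.single (tgt r) 1 - Pi.single (src r) 1 : C → ℝ)) = 0}

/-- The "orthogonal complement" of a subspace of `ℝ^𝒮` w.r.t. the standard scalar
product. -/
def perp {S : Type} [Fintype S] (U : Submodule ℝ (S → ℝ)) : Set (S → ℝ) :=
  {v | ∀ u ∈ U, ∑ s, v s * u s = 0}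


section Aux

variable {S : Type} [Fintype S]

lemma mem_perp_of_forall {U : Submodule ℝ (S → ℝ)} {v : S → ℝ}
    (h : ∀ u ∈ U, ∑ s, v s * u s = 0) : v ∈ perp U := h

lemma mem_perp_add' {U : Submodule ℝ (S → ℝ)} {v w : S → ℝ}
    (hv : v ∈ perp U) (hw : w ∈ perp U) : (fun s => v s + w s) ∈ perp U := by
  intro u hu
  have h1 := hv u hu
  have h2 := hw u hu
  simp only [add_mul, Finset.sum_add_distrib, h1, h2, add_zero]

lemma mem_perp_neg' {U : Submodule ℝ (S → ℝ)} {v : S → ℝ}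
    (hv : v ∈ perp U) : (fun s => -(v s)) ∈ perp U := by
  intro u hu
  have h1 := hv u hu
  simp only [neg_mul, Finset.sum_neg_distrib, h1, neg_zero]

lemma mem_perp_add_iff {U : Submodule ℝ (S → ℝ)} {v w : S → ℝ}
    (hw : w ∈ perp U) : (fun s => v s + w s) ∈ perp U ↔ v ∈ perp U := by
  constructor
  · intro h
    have h2 := mem_perp_add' h (mem_perp_neg' hw)
    have : v = fun s => (v s + w s) + -(w s) := by funext s; ring
    rw [this]; exact h2
  · intro h
    exact mem_perp_add' h hw

lemma mem_perp_sup {U V : Submodule ℝ (S → ℝ)} {x : S → ℝ} :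
    x ∈ perp (U ⊔ V) ↔ x ∈ perp U ∧ x ∈ perp V := by
  constructor
  · intro h
    exact ⟨fun u hu => h u (Submodule.mem_sup_left hu),
      fun u hu => h u (Submodule.mem_sup_right hu)⟩
  · rintro ⟨hU, hV⟩ u hu
    obtain ⟨a, ha, b, hb, rfl⟩ := Submodule.mem_sup.mp hu
    have h1 := hU a ha
    have h2 := hV b hb
    simp only [Pi.add_apply, mul_add, Finset.sum_add_distrib, h1, h2, add_zero]

lemma perp_decomp (U V : Submodule ℝ (S → ℝ))
    (h : U ⊓ V = ⊥) (d : S → ℝ) :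
    ∃ a b : S → ℝ, d = a + b ∧ a ∈ perp U ∧ b ∈ perp V := by
  let e : (S → ℝ) ≃ₗ[ℝ] EuclideanSpace ℝ S := (WithLp.linearEquiv 2 ℝ (S → ℝ)).symm
  have einner : ∀ x y : S → ℝ, (inner ℝ (e x) (e y) : ℝ) = ∑ s, x s * y s := by
    intro x y
    simp [PiLp.inner_apply, RCLike.inner_apply, WithLp.linearEquiv_symm_apply, e, mul_comm]
  set U' := U.map (e : (S → ℝ) →ₗ[ℝ] EuclideanSpace ℝ S) with hU'
  set V' := V.map (e : (S → ℝ) →ₗ[ℝ] EuclideanSpace ℝ S) with hV'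
  have hUV : U' ⊓ V' = ⊥ := by
    rw [hU', hV']
    rw [← Submodule.map_inf (e : (S → ℝ) →ₗ[ℝ] EuclideanSpace ℝ S) e.injective, h,
      Submodule.map_bot]
  have htop : U'ᗮ ⊔ V'ᗮ = ⊤ := by
    have h1 : (U'ᗮ ⊔ V'ᗮ)ᗮ = ⊥ := by
      rw [← Submodule.inf_orthogonal, Submodule.orthogonal_orthogonal,
        Submodule.orthogonal_orthogonal, hUV]
    calc U'ᗮ ⊔ V'ᗮ = ((U'ᗮ ⊔ V'ᗮ)ᗮ)ᗮ := (Submodule.orthogonal_orthogonal _).symm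
      _ = ⊤ := by rw [h1, Submodule.bot_orthogonal_eq_top]
  have hd : e d ∈ U'ᗮ ⊔ V'ᗮ := htop ▸ Submodule.mem_top
  obtain ⟨a', ha', b', hb', hab⟩ := Submodule.mem_sup.mp hd
  refine ⟨e.symm a', e.symm b', ?_, ?_, ?_⟩
  · apply e.injective
    rw [← hab]; simp
  · intro u hu
    have h0 := (Submodule.mem_orthogonal _ _).mp ha' (e u) (Submodule.mem_map_of_mem hu)
    have h1 := einner (e.symm a') u
    simp only [LinearEquiv.apply_symm_apply] at h1
    rw [← h1]
    rw [real_inner_comm] at h0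
    exact h0
  · intro u hu
    have h0 := (Submodule.mem_orthogonal _ _).mp hb' (e u) (Submodule.mem_map_of_mem hu)
    have h1 := einner (e.symm b') u
    simp only [LinearEquiv.apply_symm_apply] at h1
    rw [← h1]
    rw [real_inner_comm] at h0
    exact h0

end Aux

/-- let `(𝒩, K)` be a power law kinetic system with an incidence
independent decomposition `𝒩 = 𝒩₁ ∪ 𝒩₂` whose subsystems are of CLP type with
log-parametrization subspaces `S̃ᵢ`. If `S̃₁ ∩ S̃₂ = {0}`, then `(𝒩, K)` is of CLP type
with `Z₊(𝒩, K) = {x > 0 : log x − log x* ∈ (S̃₁ + S̃₂)^⊥}` for some complex balanced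
equilibrium `x*`; in particular `Z₊(𝒩, K) ≠ ∅`. -/
theorem stmt18 {S C R : Type} [Fintype S] [Fintype C] [Fintype R] [DecidableEq C]
    (src tgt : R → C)
    (hloop : ∀ r, src r ≠ tgt r)
    (part : R → Fin 2)
    (K : R → (S → ℝ) → ℝ)
    -- (𝒩, K) is a power law kinetic system:
    (kco : R → ℝ) (hk : ∀ r, 0 < kco r) (F : R → S → ℝ)
    (hK : ∀ r x, (∀ s, 0 < x s) → K r x = kco r * ∏ s, x s ^ F r s)
    -- the decomposition is incidence independent:
    (hind : IncIndep src tgt part)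
    -- each subsystem is of CLP type with subspace `S̃ᵢ`:
    (St : Fin 2 → Submodule ℝ (S → ℝ)) (x₀ : Fin 2 → (S → ℝ))
    (hx₀ : ∀ i, x₀ i ∈ Zsub src tgt K part i)
    (hCLP : ∀ i, Zsub src tgt K part i =
      {x | (∀ s, 0 < x s) ∧
        (fun s => Real.log (x s) - Real.log (x₀ i s)) ∈ perp (St i)})
    (hS : St 0 ⊓ St 1 = ⊥) :
    ∃ xstar ∈ Zfull src tgt K,
      Zfull src tgt K =
        {x | (∀ s, 0 < x s) ∧
          (fun s => Real.log (x s) - Real.log (xstar s)) ∈ perp (St 0 ⊔ St 1)} := by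

  classical
  have hsplit : ∀ g : R → (C → ℝ), ∑ r : R, g r =
      (∑ r ∈ Finset.univ.filter (fun r => part r = 0), g r) +
      (∑ r ∈ Finset.univ.filter (fun r => part r = 1), g r) := by
    intro g
    rw [← Finset.sum_filter_add_sum_filter_not Finset.univ (fun r => part r = 0) g]
    congr 1
    apply Finset.sum_congr _ (fun _ _ => rfl)
    apply Finset.filter_congr
    intro r _
    have h2 : ∀ i : Fin 2, (¬ i = 0) ↔ i = 1 := by decide
    simp [h2]
  have hZ : Zfull src tgt K = Zsub src tgt K part 0 ∩ Zsub src tgt K part 1 := by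
    ext x
    constructor
    · rintro ⟨hpos, hsum⟩
      set f : Fin 2 → (C → ℝ) := fun i => ∑ r ∈ Finset.univ.filter (fun r => part r = i),
        K r x • ((Pi.single (tgt r) 1 - Pi.single (src r) 1 : C → ℝ)) with hf
      have hfi : ∀ i, f i ∈ LinearMap.range (incidSub src tgt part i) := by
        intro i
        refine ⟨fun r => K r x, ?_⟩
        simp [incidSub, LinearMap.sum_apply, hf]
      have hfsum : ∑ i, f i = 0 := by
        rw [Fin.sum_univ_two, hf]
        rw [← hsplit]
        exact hsum
      have hz := hind.2 f hfi hfsum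
      exact ⟨⟨hpos, hz 0⟩, ⟨hpos, hz 1⟩⟩
    · rintro ⟨⟨hpos, h0⟩, ⟨-, h1⟩⟩
      refine ⟨hpos, ?_⟩
      rw [hsplit, h0, h1, add_zero]
  -- positivity of the given equilibria
  have hpos0 : ∀ s, 0 < x₀ 0 s := (hx₀ 0).1
  have hpos1 : ∀ s, 0 < x₀ 1 s := (hx₀ 1).1
  obtain ⟨u0, u1, hdsum, hu0, hu1⟩ := perp_decomp (St 0) (St 1) hS
    (fun s => Real.log (x₀ 1 s) - Real.log (x₀ 0 s))
  have hds : ∀ s, Real.log (x₀ 1 s) - Real.log (x₀ 0 s) = u0 s + u1 s :=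
    fun s => congrFun hdsum s
  set xstar : S → ℝ := fun s => Real.exp (Real.log (x₀ 0 s) + u0 s) with hxstar
  have hxpos : ∀ s, 0 < xstar s := fun s => Real.exp_pos _
  have hlog : ∀ s, Real.log (xstar s) = Real.log (x₀ 0 s) + u0 s := by
    intro s; rw [hxstar]; exact Real.log_exp _
  have hmem0 : xstar ∈ Zsub src tgt K part 0 := by
    rw [hCLP 0]
    refine ⟨hxpos, ?_⟩
    have he : (fun s => Real.log (xstar s) - Real.log (x₀ 0 s)) = u0 := by
      funext s; rw [hlog s]; ring
    rw [he]; exact hu0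
  have hmem1 : xstar ∈ Zsub src tgt K part 1 := by
    rw [hCLP 1]
    refine ⟨hxpos, ?_⟩
    have he : (fun s => Real.log (xstar s) - Real.log (x₀ 1 s)) = (fun s => -(u1 s)) := by
      funext s; rw [hlog s]; have := hds s; linarith
    rw [he]; exact mem_perp_neg' hu1
  refine ⟨xstar, by rw [hZ]; exact ⟨hmem0, hmem1⟩, ?_⟩
  rw [hZ]
  ext x
  rw [Set.mem_inter_iff, hCLP 0, hCLP 1]
  simp only [Set.mem_setOf_eq]
  constructor
  · rintro ⟨⟨hpos, h0⟩, ⟨-, h1⟩⟩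
    refine ⟨hpos, mem_perp_sup.mpr ⟨?_, ?_⟩⟩
    · have e0 : (fun s => Real.log (x s) - Real.log (x₀ 0 s)) =
          (fun s => (Real.log (x s) - Real.log (xstar s)) + u0 s) := by
        funext s; rw [hlog s]; ring
      rw [e0] at h0
      exact (mem_perp_add_iff (v := fun s => Real.log (x s) - Real.log (xstar s)) hu0).mp h0
    · have e1 : (fun s => Real.log (x s) - Real.log (x₀ 1 s)) =
          (fun s => (Real.log (x s) - Real.log (xstar s)) + (-(u1 s))) := by
        funext s; rw [hlog s]; have := hds s; linarith
      rw [e1] at h1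
      exact (mem_perp_add_iff (v := fun s => Real.log (x s) - Real.log (xstar s))
        (mem_perp_neg' hu1)).mp h1
  · rintro ⟨hpos, hmem⟩
    obtain ⟨m0, m1⟩ := mem_perp_sup.mp hmem
    refine ⟨⟨hpos, ?_⟩, ⟨hpos, ?_⟩⟩
    · have e0 : (fun s => Real.log (x s) - Real.log (x₀ 0 s)) =
          (fun s => (Real.log (x s) - Real.log (xstar s)) + u0 s) := by
        funext s; rw [hlog s]; ring
      rw [e0]
      exact (mem_perp_add_iff (v := fun s => Real.log (x s) - Real.log (xstar s)) hu0).mpr m0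
    · have e1 : (fun s => Real.log (x s) - Real.log (x₀ 1 s)) =
          (fun s => (Real.log (x s) - Real.log (xstar s)) + (-(u1 s))) := by
        funext s; rw [hlog s]; have := hds s; linarith
      rw [e1]
      exact (mem_perp_add_iff (v := fun s => Real.log (x s) - Real.log (xstar s))
        (mem_perp_neg' hu1)).mpr m1
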